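/- Let Φ be a unital completely positive map on L(H) with H finite-dimensional, and define Ψ(X, Y, Z) := Φ(Y†XZ) − Y†Φ(XZ) − Φ(Y†X)Z + Y†Φ(X)Z for X, Y, Z ∈ L(H). If Φ(X) = V†(X ⊗ 1_E)V with V ∈ L(H; H ⊗ H_E), then Ψ(X, Y, Z) = [VY − (Y ⊗ 1_E)V]†(X ⊗ 1_E)[VZ − (Z ⊗ 1_E)V]. Consequently, for every X ≥ 0 and every Y, the operator Ψ(X, Y, Y) is positive semidefinite. -/

import Mathlib

open Matrix Kronecker
open scoped ComplexOrder

lemma kron_ct {h e : Type*} (A : Matrix h h ℂ) (B : Matrix e e ℂ) :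
    (A ⊗ₖ B)ᴴ = Aᴴ ⊗ₖ Bᴴ := by
  ext ⟨i, j⟩ ⟨k, l⟩
  simp [conjTranspose_apply, kroneckerMap_apply, mul_comm]

/-- For a unital CP map `Φ(X) = V†(X ⊗ 1_E)V`, the combination
`Ψ(X,Y,Z) = Φ(Y†XZ) − Y†Φ(XZ) − Φ(Y†X)Z + Y†Φ(X)Z` equals
`[VY − (Y⊗1)V]†(X⊗1)[VZ − (Z⊗1)V]`; consequently `Ψ(X,Y,Y)` is positive semidefinite
whenever `X ≥ 0`. -/
theorem stmt_14 {h e : Type*} [Fintype h] [Fintype e] [DecidableEq h] [DecidableEq e]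
    (V : Matrix (h × e) h ℂ)
    (hunital : Vᴴ * (((1 : Matrix h h ℂ)) ⊗ₖ (1 : Matrix e e ℂ)) * V = 1)
    (Φ : Matrix h h ℂ → Matrix h h ℂ)
    (hΦ : ∀ X, Φ X = Vᴴ * (X ⊗ₖ (1 : Matrix e e ℂ)) * V)
    (Ψ : Matrix h h ℂ → Matrix h h ℂ → Matrix h h ℂ → Matrix h h ℂ)
    (hΨ : ∀ X Y Z, Ψ X Y Z = Φ (Yᴴ * X * Z) - Yᴴ * Φ (X * Z) - Φ (Yᴴ * X) * Z + Yᴴ * Φ X * Z) :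
    (∀ X Y Z : Matrix h h ℂ,
        Ψ X Y Z = (V * Y - (Y ⊗ₖ (1 : Matrix e e ℂ)) * V)ᴴ * (X ⊗ₖ (1 : Matrix e e ℂ)) *
          (V * Z - (Z ⊗ₖ (1 : Matrix e e ℂ)) * V)) ∧
      ∀ X Y : Matrix h h ℂ, X.PosSemidef → (Ψ X Y Y).PosSemidef := by
  have key : ∀ X Y Z : Matrix h h ℂ,
      Ψ X Y Z = (V * Y - (Y ⊗ₖ (1 : Matrix e e ℂ)) * V)ᴴ * (X ⊗ₖ (1 : Matrix e e ℂ)) *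
        (V * Z - (Z ⊗ₖ (1 : Matrix e e ℂ)) * V) := by
    intro X Y Z
    rw [hΨ, hΦ, hΦ, hΦ, hΦ]
    simp only [conjTranspose_sub, conjTranspose_mul, kron_ct, conjTranspose_one]
    have hk : ∀ A B : Matrix h h ℂ,
        (A ⊗ₖ (1 : Matrix e e ℂ)) * (B ⊗ₖ (1 : Matrix e e ℂ))
          = (A * B) ⊗ₖ (1 : Matrix e e ℂ) := by
      intro A B; rw [← Matrix.mul_kronecker_mul, one_mul]
    simp only [← hk]
    simp only [Matrix.sub_mul, Matrix.mul_sub, Matrix.mul_assoc]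
    abel
  refine ⟨key, fun X Y hX => ?_⟩
  rw [key]
  obtain ⟨B, hB⟩ : ∃ B : Matrix h h ℂ, X = Bᴴ * B := by
    open scoped MatrixOrder in exact CStarAlgebra.nonneg_iff_eq_star_mul_self.mp hX.nonneg
  have h2 : (X ⊗ₖ (1 : Matrix e e ℂ)) = (B ⊗ₖ (1 : Matrix e e ℂ))ᴴ * (B ⊗ₖ (1 : Matrix e e ℂ)) := by
    rw [kron_ct, conjTranspose_one, ← Matrix.mul_kronecker_mul, one_mul, ← hB]
  have : (X ⊗ₖ (1 : Matrix e e ℂ)).PosSemidef := by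
    rw [h2]; exact Matrix.posSemidef_conjTranspose_mul_self _
  exact this.conjTranspose_mul_mul_same _
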